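/- Let p be an odd prime, n \ge 1, S coprime to p, w an integer, and \alpha,\beta nonnegative integers with 2\alpha+\beta \le n. Then \sum over x in [0,p^n) with x \equiv w (mod p^\alpha) of e^{2\pi i S p^\beta x^2/p^n} equals 0 if p^\alpha \nmid w, and equals p^\beta G(S;p^{n-\beta}) if p^\alpha | w. -/

import Mathlib

open Finset

noncomputable def Gsum (S : ℤ) (k : ℕ) : ℂ :=
  ∑ x ∈ Finset.range k,
    Complex.exp (2 * Real.pi * Complex.I * ((S * (x : ℤ) ^ 2 : ℤ) : ℂ) / (k : ℂ))

noncomputable def Gsum2 (a b c S : ℤ) (k : ℕ) : ℂ :=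
  ∑ x ∈ Finset.range k, ∑ y ∈ Finset.range k,
    Complex.exp (2 * Real.pi * Complex.I *
      ((S * (a * (x : ℤ) ^ 2 + b * (x : ℤ) * (y : ℤ) + c * (y : ℤ) ^ 2) : ℤ) : ℂ) / (k : ℂ))

noncomputable def E (a : ℤ) (k : ℕ) : ℂ :=
  Complex.exp (2 * Real.pi * Complex.I * (a : ℂ) / (k : ℂ))

lemma Gsum_eq (S : ℤ) (k : ℕ) : Gsum S k = ∑ x ∈ range k, E (S * (x:ℤ)^2) k := rfl

lemma E_mul (a b : ℤ) (k : ℕ) : E a k * E b k = E (a + b) k := by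
  unfold E
  rw [← Complex.exp_add]
  congr 1
  push_cast
  ring

lemma E_int_mul (d : ℤ) (k : ℕ) (hk : k ≠ 0) : E ((k : ℤ) * d) k = 1 := by
  unfold E
  have hk' : (k : ℂ) ≠ 0 := Nat.cast_ne_zero.mpr hk
  have : 2 * (Real.pi : ℂ) * Complex.I * ((k : ℤ) * d : ℤ) / (k : ℂ) = d * (2 * Real.pi * Complex.I) := by
    field_simp
    simp
  rw [this, Complex.exp_int_mul_two_pi_mul_I]

lemma E_periodic (a d : ℤ) (k : ℕ) (hk : k ≠ 0) : E (a + (k : ℤ) * d) k = E a k := by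
  rw [← E_mul, E_int_mul d k hk, mul_one]

lemma E_pow (a : ℤ) (k : ℕ) (v : ℕ) : (E a k) ^ v = E (a * v) k := by
  induction v with
  | zero => simp [E]
  | succ m ih =>
      rw [pow_succ, ih, E_mul]
      congr 1
      push_cast
      ring

lemma E_eq_one_iff (a : ℤ) (k : ℕ) (hk : k ≠ 0) : E a k = 1 ↔ (k : ℤ) ∣ a := by
  have hk' : (k : ℂ) ≠ 0 := Nat.cast_ne_zero.mpr hk
  have h2 : (2 * (Real.pi : ℂ) * Complex.I) ≠ 0 := by
    simp [Real.pi_ne_zero, Complex.I_ne_zero, Complex.ofReal_ne_zero]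
  constructor
  · intro h
    rw [E, Complex.exp_eq_one_iff] at h
    obtain ⟨m, hm⟩ := h
    have hm' : 2 * (Real.pi : ℂ) * Complex.I * (a : ℂ) = (m : ℂ) * (2 * Real.pi * Complex.I) * k :=
      (div_eq_iff hk').mp hm
    have : (a : ℂ) = (m : ℂ) * k := by
      apply mul_left_cancel₀ h2
      linear_combination hm'
    have : (a : ℤ) = m * k := by exact_mod_cast this
    exact ⟨m, by linarith [this]⟩
  · rintro ⟨d, rfl⟩
    exact E_int_mul d k hk

lemma E_factor (d : ℕ) (hd : d ≠ 0) (a : ℤ) (k : ℕ) :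
    E ((d : ℤ) * a) (d * k) = E a k := by
  rcases Nat.eq_zero_or_pos k with rfl | hk
  · simp [E]
  · unfold E
    congr 1
    have hd' : (d : ℂ) ≠ 0 := Nat.cast_ne_zero.mpr hd
    have hk' : (k : ℂ) ≠ 0 := Nat.cast_ne_zero.mpr hk.ne'
    push_cast
    field_simp

lemma sum_range_mul_decomp (A B : ℕ) (F : ℕ → ℂ) :
    ∑ x ∈ range (A * B), F x = ∑ v ∈ range B, ∑ u ∈ range A, F (u + A * v) := by
  induction B with
  | zero => simp
  | succ b ih =>
      rw [Nat.mul_succ, Finset.sum_range_add, ih, Finset.sum_range_succ]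
      congr 1
      exact Finset.sum_congr rfl fun u _ => by rw [Nat.add_comm]

lemma sum_E_geom_zero (k : ℕ) (hk : k ≠ 0) (c : ℤ) (N : ℕ)
    (hdvd : (k : ℤ) ∣ c * N) (hne : ¬ (k : ℤ) ∣ c) :
    ∑ v ∈ range N, E (c * v) k = 0 := by
  have h1 : E c k ≠ 1 := fun h => hne ((E_eq_one_iff c k hk).mp h)
  have : ∑ v ∈ range N, E (c * v) k = ∑ v ∈ range N, (E c k) ^ v :=
    Finset.sum_congr rfl fun v _ => (E_pow c k v).symm
  rw [this, geom_sum_eq h1, E_pow, (E_eq_one_iff _ k hk).mpr hdvd, sub_self, zero_div]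

lemma sum_E_geom_triv (k : ℕ) (hk : k ≠ 0) (c : ℤ) (N : ℕ) (hdvd : (k : ℤ) ∣ c) :
    ∑ v ∈ range N, E (c * v) k = N := by
  have : ∀ v ∈ range N, E (c * v) k = 1 := by
    intro v _
    exact (E_eq_one_iff _ k hk).mpr (Dvd.dvd.mul_right hdvd v)
  rw [Finset.sum_congr rfl this]
  simp

lemma classSum (p : ℕ) (hp : p.Prime) (hodd : p ≠ 2) (S : ℤ) (hS : IsCoprime S (p : ℤ))
    (α β m w₀ : ℕ) (hw : w₀ < p ^ α) :
    ∑ t ∈ range (p ^ (m + α + β)),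
        E (S * (p : ℤ) ^ β * ((w₀ : ℤ) + (p : ℤ) ^ α * (t : ℤ)) ^ 2) (p ^ (m + 2*α + β))
      = if w₀ = 0 then (p : ℂ) ^ (α + β) * Gsum S (p ^ m) else 0 := by
  have hp0 : 0 < p := hp.pos
  have hpn : p ^ (m + 2*α + β) ≠ 0 := pow_ne_zero _ hp0.ne'
  have hpab : p ^ (α + β) ≠ 0 := pow_ne_zero _ hp0.ne'
  have hsplit : p ^ (m + α + β) = p ^ m * p ^ (α + β) := by rw [← pow_add, Nat.add_assoc]
  rw [hsplit, sum_range_mul_decomp, Finset.sum_comm]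
  -- inner sum computation
  have inner : ∀ u : ℕ,
      ∑ v ∈ range (p ^ (α + β)),
        E (S * (p : ℤ) ^ β * ((w₀ : ℤ) + (p : ℤ) ^ α * ((u + p ^ m * v : ℕ) : ℤ)) ^ 2)
          (p ^ (m + 2*α + β))
      = E (S * (p : ℤ) ^ β * ((w₀ : ℤ) + (p : ℤ) ^ α * (u : ℤ)) ^ 2) (p ^ (m + 2*α + β)) *
        ∑ v ∈ range (p ^ (α + β)),
          E ((2 * S * ((w₀ : ℤ) + (p : ℤ) ^ α * (u : ℤ)) * (p : ℤ) ^ (m + α + β)) * (v : ℤ))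
            (p ^ (m + 2*α + β)) := by
    intro u
    rw [Finset.mul_sum]
    refine Finset.sum_congr rfl fun v _ => ?_
    rw [E_mul]
    have harg : S * (p : ℤ) ^ β * ((w₀ : ℤ) + (p : ℤ) ^ α * ((u + p ^ m * v : ℕ) : ℤ)) ^ 2
        = (S * (p : ℤ) ^ β * ((w₀ : ℤ) + (p : ℤ) ^ α * (u : ℤ)) ^ 2 +
            (2 * S * ((w₀ : ℤ) + (p : ℤ) ^ α * (u : ℤ)) * (p : ℤ) ^ (m + α + β)) * (v : ℤ))
          + ((p ^ (m + 2*α + β) : ℕ) : ℤ) * (S * (p : ℤ) ^ m * (v : ℤ) ^ 2) := by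
      push_cast
      ring
    rw [harg, E_periodic _ _ _ hpn]
  by_cases hw0 : w₀ = 0
  · subst hw0
    rw [if_pos rfl]
    have geo : ∀ u : ℕ,
        ∑ v ∈ range (p ^ (α + β)),
          E ((2 * S * (((0:ℕ) : ℤ) + (p : ℤ) ^ α * (u : ℤ)) * (p : ℤ) ^ (m + α + β)) * (v : ℤ))
            (p ^ (m + 2*α + β)) = ((p ^ (α + β) : ℕ) : ℂ) := by
      intro u
      apply sum_E_geom_triv _ hpn
      exact ⟨2 * S * u, by push_cast; ring⟩
    calc ∑ u ∈ range (p ^ m), ∑ v ∈ range (p ^ (α + β)),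
          E (S * (p : ℤ) ^ β * (((0:ℕ) : ℤ) + (p : ℤ) ^ α * ((u + p ^ m * v : ℕ) : ℤ)) ^ 2)
            (p ^ (m + 2*α + β))
        = ∑ u ∈ range (p ^ m),
            E (S * (p : ℤ) ^ β * (((0:ℕ) : ℤ) + (p : ℤ) ^ α * (u : ℤ)) ^ 2) (p ^ (m + 2*α + β)) *
              ((p ^ (α + β) : ℕ) : ℂ) := by
          refine Finset.sum_congr rfl fun u _ => ?_
          rw [inner u, geo u]
      _ = ∑ u ∈ range (p ^ m), E (S * (u : ℤ) ^ 2) (p ^ m) * ((p ^ (α + β) : ℕ) : ℂ) := by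
          refine Finset.sum_congr rfl fun u _ => ?_
          congr 1
          have hfac : p ^ (m + 2*α + β) = p ^ (2*α + β) * p ^ m := by
            rw [← pow_add]; congr 1; omega
          rw [hfac, ← E_factor (p ^ (2*α + β)) (pow_ne_zero _ hp0.ne') (S * (u : ℤ) ^ 2) (p ^ m)]
          congr 1
          push_cast
          ring
      _ = (p : ℂ) ^ (α + β) * Gsum S (p ^ m) := by
          rw [← Finset.sum_mul, Gsum_eq]
          push_cast
          ring
  · rw [if_neg hw0]
    have geo : ∀ u : ℕ,
        ∑ v ∈ range (p ^ (α + β)),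
          E ((2 * S * ((w₀ : ℤ) + (p : ℤ) ^ α * (u : ℤ)) * (p : ℤ) ^ (m + α + β)) * (v : ℤ))
            (p ^ (m + 2*α + β)) = 0 := by
      intro u
      apply sum_E_geom_zero _ hpn
      · exact ⟨2 * S * ((w₀ : ℤ) + (p : ℤ) ^ α * (u : ℤ)) * (p : ℤ) ^ β, by push_cast; ring⟩
      · intro hdv
        have h1 : ((p : ℤ) ^ α * (p : ℤ) ^ (m + α + β)) ∣
            ((2 * S * ((w₀ : ℤ) + (p : ℤ) ^ α * (u : ℤ))) * (p : ℤ) ^ (m + α + β)) := by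
          convert hdv using 1
          all_goals (push_cast; ring)
        have hpne : ((p : ℤ) ^ (m + α + β)) ≠ 0 := by positivity
        have h2 : (p : ℤ) ^ α ∣ 2 * S * ((w₀ : ℤ) + (p : ℤ) ^ α * (u : ℤ)) :=
          (mul_dvd_mul_iff_right hpne).mp h1
        have hoddp : Odd p := hp.odd_of_ne_two hodd
        have h2p : IsCoprime (2 : ℤ) ((p : ℤ)) := by
          rw [Int.isCoprime_iff_gcd_eq_one]
          have : Nat.Coprime 2 p := Nat.coprime_two_left.mpr hoddp
          simpa [Int.gcd] using this
        have hcop : IsCoprime ((p : ℤ) ^ α) (2 * S) :=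
          ((h2p.mul_left hS).pow_right (n := α)).symm
        have h3 : (p : ℤ) ^ α ∣ ((w₀ : ℤ) + (p : ℤ) ^ α * (u : ℤ)) :=
          hcop.dvd_of_dvd_mul_left h2
        have h4 : (p : ℤ) ^ α ∣ (w₀ : ℤ) := by
          have := dvd_sub h3 (dvd_mul_right ((p : ℤ) ^ α) (u : ℤ))
          simpa using this
        have hle : (p : ℤ) ^ α ≤ (w₀ : ℤ) :=
          Int.le_of_dvd (by exact_mod_cast Nat.pos_of_ne_zero hw0) h4
        have hlt : (w₀ : ℤ) < (p : ℤ) ^ α := by exact_mod_cast hw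
        linarith
    refine Finset.sum_eq_zero fun u _ => ?_
    rw [inner u, geo u, mul_zero]

lemma Gstep (p : ℕ) (hp : p.Prime) (hodd : p ≠ 2) (S : ℤ) (hS : IsCoprime S (p : ℤ))
    (k : ℕ) : Gsum S (p ^ (k + 2)) = (p : ℂ) * Gsum S (p ^ k) := by
  have hp0 : 0 < p := hp.pos
  have key : ∀ u : ℕ, u < p →
      ∑ v ∈ range (p ^ (k + 1)), E (S * ((u + p * v : ℕ) : ℤ) ^ 2) (p ^ (k + 2))
        = if u = 0 then (p : ℂ) ^ (1 + 0) * Gsum S (p ^ k) else 0 := by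
    intro u hu
    have h := classSum p hp hodd S hS 1 0 k u (by simpa using hu)
    rw [← h]
    apply Finset.sum_congr (by norm_num)
    intro t _
    have harg : S * ((u + p * t : ℕ) : ℤ) ^ 2
        = S * (p : ℤ) ^ 0 * ((u : ℤ) + (p : ℤ) ^ 1 * (t : ℤ)) ^ 2 := by push_cast; ring
    rw [harg]
  have hA : p ^ (k + 2) = p * p ^ (k + 1) := by
    rw [← pow_succ']
  have hrange : range (p ^ (k + 2)) = range (p * p ^ (k + 1)) := by rw [hA]
  rw [Gsum_eq]
  calc ∑ x ∈ range (p ^ (k + 2)), E (S * (x : ℤ) ^ 2) (p ^ (k + 2))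
      = ∑ v ∈ range (p ^ (k + 1)), ∑ u ∈ range p,
          E (S * ((u + p * v : ℕ) : ℤ) ^ 2) (p ^ (k + 2)) := by
        rw [hrange]
        exact sum_range_mul_decomp p (p ^ (k + 1)) _
    _ = ∑ u ∈ range p, ∑ v ∈ range (p ^ (k + 1)),
          E (S * ((u + p * v : ℕ) : ℤ) ^ 2) (p ^ (k + 2)) := Finset.sum_comm
    _ = ∑ u ∈ range p, (if u = 0 then (p : ℂ) ^ (1 + 0) * Gsum S (p ^ k) else 0) :=
        Finset.sum_congr rfl fun u hu => key u (Finset.mem_range.mp hu)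
    _ = (p : ℂ) * Gsum S (p ^ k) := by
        rw [Finset.sum_ite_eq' (range p) 0 (fun _ => (p : ℂ) ^ (1 + 0) * Gsum S (p ^ k))]
        simp [Finset.mem_range, hp0]

lemma Giter (p : ℕ) (hp : p.Prime) (hodd : p ≠ 2) (S : ℤ) (hS : IsCoprime S (p : ℤ))
    (m : ℕ) : ∀ a : ℕ, Gsum S (p ^ (m + 2 * a)) = (p : ℂ) ^ a * Gsum S (p ^ m) := by
  intro a
  induction a with
  | zero => simp
  | succ b ih =>
      have h1 : m + 2 * (b + 1) = (m + 2 * b) + 2 := by omega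
      rw [h1, Gstep p hp hodd S hS (m + 2 * b), ih, pow_succ]
      ring


theorem stmt_8 (p : ℕ) (hp : p.Prime) (hodd : p ≠ 2) (n : ℕ) (hn : 0 < n)
    (S : ℤ) (hS : IsCoprime S (p : ℤ)) (w : ℤ) (α β : ℕ) (hα : α ≤ n) (hβ : β ≤ n)
    (h : 2 * α + β ≤ n) :
    (¬ (p : ℤ) ^ α ∣ w →
      ∑ x ∈ (Finset.range (p ^ n)).filter (fun x : ℕ => (x : ℤ) % (p : ℤ) ^ α = w % (p : ℤ) ^ α),
          Complex.exp (2 * Real.pi * Complex.I *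
            ((S * (p : ℤ) ^ β * (x : ℤ) ^ 2 : ℤ) : ℂ) / ((p : ℂ) ^ n)) = 0) ∧
    ((p : ℤ) ^ α ∣ w →
      ∑ x ∈ (Finset.range (p ^ n)).filter (fun x : ℕ => (x : ℤ) % (p : ℤ) ^ α = w % (p : ℤ) ^ α),
          Complex.exp (2 * Real.pi * Complex.I *
            ((S * (p : ℤ) ^ β * (x : ℤ) ^ 2 : ℤ) : ℂ) / ((p : ℂ) ^ n)) =
        (p : ℂ) ^ β * Gsum S (p ^ (n - β))) := by
  have hp0 : 0 < p := hp.pos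
  have hpa : (0 : ℤ) < (p : ℤ) ^ α := by positivity
  set w₀ : ℕ := (w % (p : ℤ) ^ α).toNat with hw₀def
  have hw₀ : (w₀ : ℤ) = w % (p : ℤ) ^ α := Int.toNat_of_nonneg (Int.emod_nonneg w hpa.ne')
  have hw₀lt : w₀ < p ^ α := by
    have h1 := Int.emod_lt_of_pos w hpa
    have h2 : (w₀ : ℤ) < ((p ^ α : ℕ) : ℤ) := by
      rw [hw₀]; push_cast; exact h1
    exact_mod_cast h2
  set m : ℕ := n - 2 * α - β with hmdef
  have hm2 : n = m + 2 * α + β := by omega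
  have main : ∑ x ∈ (Finset.range (p ^ n)).filter
        (fun x : ℕ => (x : ℤ) % (p : ℤ) ^ α = w % (p : ℤ) ^ α),
          Complex.exp (2 * Real.pi * Complex.I *
            ((S * (p : ℤ) ^ β * (x : ℤ) ^ 2 : ℤ) : ℂ) / ((p : ℂ) ^ n))
      = if w₀ = 0 then (p : ℂ) ^ (α + β) * Gsum S (p ^ m) else 0 := by
    have hstep1 : ∑ x ∈ (Finset.range (p ^ n)).filter
          (fun x : ℕ => (x : ℤ) % (p : ℤ) ^ α = w % (p : ℤ) ^ α),
            Complex.exp (2 * Real.pi * Complex.I *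
              ((S * (p : ℤ) ^ β * (x : ℤ) ^ 2 : ℤ) : ℂ) / ((p : ℂ) ^ n))
        = ∑ t ∈ range (p ^ (n - α)),
            E (S * (p : ℤ) ^ β * ((w₀ : ℤ) + (p : ℤ) ^ α * (t : ℤ)) ^ 2) (p ^ n) := by
      apply Finset.sum_nbij' (fun x => x / p ^ α) (fun t => w₀ + p ^ α * t)
      · -- hi
        intro x hx
        rw [Finset.mem_filter, Finset.mem_range] at hx
        rw [Finset.mem_range]
        have hxlt : x < p ^ α * p ^ (n - α) := by
          rw [← pow_add]
          have : α + (n - α) = n := by omega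
          rw [this]; exact hx.1
        exact Nat.div_lt_of_lt_mul hxlt
      · -- hj
        intro t ht
        rw [Finset.mem_range] at ht
        rw [Finset.mem_filter, Finset.mem_range]
        constructor
        · calc w₀ + p ^ α * t < p ^ α + p ^ α * t := by omega
            _ = p ^ α * (t + 1) := by ring
            _ ≤ p ^ α * p ^ (n - α) := Nat.mul_le_mul_left _ (by omega)
            _ = p ^ n := by rw [← pow_add]; congr 1; omega
        · push_cast
          rw [Int.add_mul_emod_self_left, hw₀, Int.emod_emod_of_dvd _ dvd_rfl]
      · -- left_inv
        intro x hx
        rw [Finset.mem_filter] at hx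
        have hmod : x % p ^ α = w₀ := by
          have : ((x % p ^ α : ℕ) : ℤ) = (w₀ : ℤ) := by
            push_cast
            rw [hw₀, ← hx.2]
          exact_mod_cast this
        calc w₀ + p ^ α * (x / p ^ α) = x % p ^ α + p ^ α * (x / p ^ α) := by rw [hmod]
          _ = x := Nat.mod_add_div x (p ^ α)
      · -- right_inv
        intro t ht
        rw [Nat.add_mul_div_left _ _ (pow_pos hp0 α), Nat.div_eq_of_lt hw₀lt, Nat.zero_add]
      · -- values
        intro x hx
        rw [Finset.mem_filter] at hx
        have hmod : x % p ^ α = w₀ := by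
          have : ((x % p ^ α : ℕ) : ℤ) = (w₀ : ℤ) := by
            push_cast
            rw [hw₀, ← hx.2]
          exact_mod_cast this
        have hrec : (x : ℤ) = (w₀ : ℤ) + (p : ℤ) ^ α * ((x / p ^ α : ℕ) : ℤ) := by
          have : x = w₀ + p ^ α * (x / p ^ α) := by
            conv_lhs => rw [← Nat.mod_add_div x (p ^ α), hmod]
          exact_mod_cast congrArg (Nat.cast : ℕ → ℤ) this
        rw [E, Nat.cast_pow]
        have harg : S * (p : ℤ) ^ β * (x : ℤ) ^ 2
            = S * (p : ℤ) ^ β * ((w₀ : ℤ) + (p : ℤ) ^ α * ((x / p ^ α : ℕ) : ℤ)) ^ 2 := by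
          rw [← hrec]
        rw [harg]
    rw [hstep1]
    have hr1 : p ^ (n - α) = p ^ (m + α + β) := by
      have hh : n - α = m + α + β := by omega
      rw [hh]
    have hr2 : p ^ n = p ^ (m + 2 * α + β) := by
      have hh : n = m + 2 * α + β := by omega
      rw [hh]
    rw [hr1, hr2]
    exact classSum p hp hodd S hS α β m w₀ hw₀lt
  constructor
  · intro hnd
    have hw0ne : w₀ ≠ 0 := by
      intro h0
      apply hnd
      apply Int.dvd_of_emod_eq_zero
      rw [← hw₀, h0]
      rfl
    rw [main, if_neg hw0ne]
  · intro hd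
    have hw0 : w₀ = 0 := by
      rw [hw₀def, Int.emod_eq_zero_of_dvd hd]
      rfl
    rw [main, if_pos hw0]
    have hnb : n - β = m + 2 * α := by omega
    rw [hnb, Giter p hp hodd S hS m α, pow_add]
    ring
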